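/- Let A : V → V be a monotone map on a real inner product space V, i.e. ⟨A(x) − A(y), x − y⟩ ≥ 0 for all x, y. Suppose xₙ → x weakly in L²(Ω; V), A(xₙ) → χ weakly-* in L^∞(Ω; V), and limsup ∫ ⟨A(xₙ), xₙ⟩ ≤ ∫ ⟨χ, x⟩. Then for every y ∈ L²(Ω; V), ∫ ⟨χ − A(y), x − y⟩ ≥ 0 (Minty-type inequality). -/

import Mathlib

open MeasureTheory Filter
open scoped RealInnerProductSpace ENNReal

section Aux

variable {Ω : Type*} [MeasurableSpace Ω] {μ : Measure Ω}
  {V : Type*} [NormedAddCommGroup V] [InnerProductSpace ℝ V]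

lemma aux_ae_bound {g : Ω → V} (hg : MemLp g ⊤ μ) :
    ∀ᵐ ω ∂μ, ‖g ω‖ ≤ (eLpNormEssSup g μ).toReal := by
  have hne : eLpNormEssSup g μ ≠ ⊤ := by
    have h2 := hg.2
    rwa [eLpNorm_exponent_top, lt_top_iff_ne_top] at h2
  filter_upwards [ae_le_eLpNormEssSup (f := g) (μ := μ)] with ω hω
  have h : ((‖g ω‖₊ : ℝ≥0∞)).toReal ≤ (eLpNormEssSup g μ).toReal :=
    ENNReal.toReal_mono hne hω
  simpa using h

lemma aux_integrable_pairing {g φ : Ω → V} (hg : MemLp g ⊤ μ) (hφ : Integrable φ μ) :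
    Integrable (fun ω => ⟪g ω, φ ω⟫) μ := by
  refine (hφ.norm.const_mul (eLpNormEssSup g μ).toReal).mono' (hg.1.inner hφ.1) ?_
  filter_upwards [aux_ae_bound hg] with ω hω
  calc ‖⟪g ω, φ ω⟫‖ ≤ ‖g ω‖ * ‖φ ω‖ := norm_inner_le_norm _ _
    _ ≤ (eLpNormEssSup g μ).toReal * ‖φ ω‖ :=
        mul_le_mul_of_nonneg_right hω (norm_nonneg _)

noncomputable def pairingL (g : Ω → V) (hg : MemLp g ⊤ μ) : Lp V 1 μ →L[ℝ] ℝ :=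
  LinearMap.mkContinuous
    { toFun := fun φ => ∫ ω, ⟪g ω, φ ω⟫ ∂μ
      map_add' := by
        intro φ ψ
        have h1 := aux_integrable_pairing hg (L1.integrable_coeFn φ)
        have h2 := aux_integrable_pairing hg (L1.integrable_coeFn ψ)
        rw [← integral_add h1 h2]
        refine integral_congr_ae ?_
        filter_upwards [Lp.coeFn_add φ ψ] with ω hω
        rw [hω, Pi.add_apply, inner_add_right]
      map_smul' := by
        intro c φ
        have h1 := aux_integrable_pairing hg (L1.integrable_coeFn φ)
        show (∫ ω, ⟪g ω, ((c • φ : Lp V 1 μ) : Ω → V) ω⟫ ∂μ)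
            = c • ∫ ω, ⟪g ω, (φ : Ω → V) ω⟫ ∂μ
        rw [← integral_smul]
        refine integral_congr_ae ?_
        filter_upwards [Lp.coeFn_smul c φ] with ω hω
        simp [hω, inner_smul_right] }
    ((eLpNormEssSup g μ).toReal)
    (by
      intro φ
      have h1 := aux_integrable_pairing hg (L1.integrable_coeFn φ)
      calc ‖∫ ω, ⟪g ω, φ ω⟫ ∂μ‖ ≤ ∫ ω, ‖⟪g ω, (φ : Ω → V) ω⟫‖ ∂μ :=
            norm_integral_le_integral_norm _
        _ ≤ ∫ ω, (eLpNormEssSup g μ).toReal * ‖(φ : Ω → V) ω‖ ∂μ := by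
            refine integral_mono_ae h1.norm ((L1.integrable_coeFn φ).norm.const_mul _) ?_
            filter_upwards [aux_ae_bound hg] with ω hω
            calc ‖⟪g ω, (φ : Ω → V) ω⟫‖ ≤ ‖g ω‖ * ‖(φ : Ω → V) ω‖ := norm_inner_le_norm _ _
              _ ≤ _ := mul_le_mul_of_nonneg_right hω (norm_nonneg _)
        _ = (eLpNormEssSup g μ).toReal * ‖φ‖ := by
            rw [integral_const_mul, L1.norm_eq_integral_norm])

lemma pairingL_apply (g : Ω → V) (hg : MemLp g ⊤ μ) (φ : Lp V 1 μ) :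
    pairingL g hg φ = ∫ ω, ⟪g ω, φ ω⟫ ∂μ := rfl

end Aux
/-- Minty-type inequality: if A is monotone, xₙ ⇀ x weakly in L², A(xₙ) ⇀* χ in L^∞ and
limsup ∫⟨A(xₙ), xₙ⟩ ≤ ∫⟨χ, x⟩, then ∫⟨χ − A(y), x − y⟩ ≥ 0 for all y ∈ L². -/
theorem stmt_3 {Ω : Type*} [MeasurableSpace Ω] (μ : Measure Ω) [IsFiniteMeasure μ]
    {V : Type*} [NormedAddCommGroup V] [InnerProductSpace ℝ V] [FiniteDimensional ℝ V]
    (A : V → V) (hAcont : Continuous A)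
    (hAmono : ∀ x y : V, 0 ≤ ⟪A x - A y, x - y⟫)
    (xn : ℕ → Ω → V) (x χ : Ω → V)
    (hxn : ∀ n, MemLp (xn n) 2 μ) (hx : MemLp x 2 μ)
    (hAxn : ∀ n, MemLp (fun ω => A (xn n ω)) ⊤ μ) (hχ : MemLp χ ⊤ μ)
    (hweak : ∀ φ : Ω → V, MemLp φ 2 μ →
      Tendsto (fun n => ∫ ω, ⟪xn n ω, φ ω⟫ ∂μ) atTop (nhds (∫ ω, ⟪x ω, φ ω⟫ ∂μ)))
    (hweakstar : ∀ φ : Ω → V, Integrable φ μ →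
      Tendsto (fun n => ∫ ω, ⟪A (xn n ω), φ ω⟫ ∂μ) atTop (nhds (∫ ω, ⟪χ ω, φ ω⟫ ∂μ)))
    (hlimsup : limsup (fun n => ∫ ω, ⟪A (xn n ω), xn n ω⟫ ∂μ) atTop ≤ ∫ ω, ⟪χ ω, x ω⟫ ∂μ) :
    ∀ y : Ω → V, MemLp y 2 μ → 0 ≤ ∫ ω, ⟪χ ω - A (y ω), x ω - y ω⟫ ∂μ := by
  have hxint : ∀ n, Integrable (xn n) μ := fun n => (hxn n).integrable one_le_two
  -- Step 1: uniform bound on aₙ = ∫ ⟪A xₙ, xₙ⟫.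
  set a : ℕ → ℝ := fun n => ∫ ω, ⟪A (xn n ω), xn n ω⟫ ∂μ with ha
  have hM : ∃ M, ∀ n, a n ≤ M := by
    -- L² bound via Banach–Steinhaus
    set ξ : ℕ → Lp V 2 μ := fun n => (hxn n).toLp (xn n) with hξ
    set T : ℕ → (Lp V 2 μ →L[ℝ] ℝ) := fun n => innerSL ℝ (ξ n) with hT
    obtain ⟨C2, hC2⟩ : ∃ C2, ∀ n, ‖T n‖ ≤ C2 := by
      apply banach_steinhaus
      intro φ
      have hconv := (hweak φ (Lp.memLp φ)).norm
      obtain ⟨C, hC⟩ := hconv.bddAbove_range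
      refine ⟨C, fun n => ?_⟩
      have heq : T n φ = ∫ ω, ⟪xn n ω, (φ : Ω → V) ω⟫ ∂μ := by
        show ⟪ξ n, φ⟫ = _
        rw [L2.inner_def]
        refine integral_congr_ae ?_
        filter_upwards [MemLp.coeFn_toLp (hxn n)] with ω hω
        rw [hω]
      rw [heq]
      exact hC ⟨n, rfl⟩
    have hξnorm : ∀ n, ‖ξ n‖ ≤ C2 := fun n => by
      have : ‖T n‖ = ‖ξ n‖ := innerSL_apply_norm (𝕜 := ℝ) (ξ n)
      rw [← this]; exact hC2 n
    -- L¹ operator bound via Banach–Steinhaus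
    set S : ℕ → (Lp V 1 μ →L[ℝ] ℝ) := fun n => pairingL (fun ω => A (xn n ω)) (hAxn n) with hS
    obtain ⟨C1, hC1⟩ : ∃ C1, ∀ n, ‖S n‖ ≤ C1 := by
      apply banach_steinhaus
      intro φ
      have hconv := (hweakstar φ (L1.integrable_coeFn φ)).norm
      obtain ⟨C, hC⟩ := hconv.bddAbove_range
      exact ⟨C, fun n => hC ⟨n, rfl⟩⟩
    -- L¹ norms of xₙ are bounded
    set K : ℝ := (μ Set.univ ^ ((1:ℝ)/(1:ℝ≥0∞).toReal - 1/(2:ℝ≥0∞).toReal)).toReal * max C2 0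
      with hK
    have hxn1 : ∀ n, MemLp (xn n) 1 μ :=
      fun n => (hxn n).mono_exponent one_le_two
    set η : ℕ → Lp V 1 μ := fun n => (hxn1 n).toLp (xn n) with hη
    have hmeas_ne : μ Set.univ ^ ((1:ℝ)/(1:ℝ≥0∞).toReal - 1/(2:ℝ≥0∞).toReal) ≠ ⊤ :=
      ENNReal.rpow_ne_top_of_nonneg (by norm_num) (measure_ne_top μ _)
    have hηnorm : ∀ n, ‖η n‖ ≤ K := by
      intro n
      have h1 : eLpNorm (xn n) 1 μ ≤ eLpNorm (xn n) 2 μ *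
          μ Set.univ ^ ((1:ℝ)/(1:ℝ≥0∞).toReal - 1/(2:ℝ≥0∞).toReal) :=
        eLpNorm_le_eLpNorm_mul_rpow_measure_univ one_le_two (hxn n).1
      have hfin : eLpNorm (xn n) 2 μ *
          μ Set.univ ^ ((1:ℝ)/(1:ℝ≥0∞).toReal - 1/(2:ℝ≥0∞).toReal) ≠ ⊤ :=
        ENNReal.mul_ne_top (hxn n).2.ne hmeas_ne
      have h2 : ‖η n‖ = (eLpNorm (xn n) 1 μ).toReal := Lp.norm_toLp _ _
      rw [h2]
      calc (eLpNorm (xn n) 1 μ).toReal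
          ≤ (eLpNorm (xn n) 2 μ * μ Set.univ ^
              ((1:ℝ)/(1:ℝ≥0∞).toReal - 1/(2:ℝ≥0∞).toReal)).toReal :=
            ENNReal.toReal_mono hfin h1
        _ = (eLpNorm (xn n) 2 μ).toReal *
              (μ Set.univ ^ ((1:ℝ)/(1:ℝ≥0∞).toReal - 1/(2:ℝ≥0∞).toReal)).toReal := by
            rw [ENNReal.toReal_mul]
        _ ≤ K := by
            rw [hK, mul_comm]
            refine mul_le_mul_of_nonneg_left ?_ ENNReal.toReal_nonneg
            refine le_max_of_le_left ?_
            have := hξnorm n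
            rwa [Lp.norm_toLp] at this
    refine ⟨(max C1 0) * K, fun n => ?_⟩
    have haeq : a n = S n (η n) := by
      rw [pairingL_apply]
      refine integral_congr_ae ?_
      filter_upwards [MemLp.coeFn_toLp (hxn1 n)] with ω hω
      rw [hω]
    rw [haeq]
    calc S n (η n) ≤ ‖S n (η n)‖ := le_abs_self _
      _ ≤ ‖S n‖ * ‖η n‖ := (S n).le_opNorm _
      _ ≤ (max C1 0) * K :=
          mul_le_mul (le_max_of_le_left (hC1 n)) (hηnorm n) (norm_nonneg _)
            (le_max_right _ _)
  obtain ⟨M, hM⟩ := hM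
  -- Step 2: the inequality for essentially bounded z.
  have key : ∀ z : Ω → V, MemLp z ⊤ μ → 0 ≤ ∫ ω, ⟪χ ω - A (z ω), x ω - z ω⟫ ∂μ := by
    intro z hz
    have hzint : Integrable z μ := (hz.mono_exponent le_top).integrable le_rfl
    have hz2 : MemLp z 2 μ := hz.mono_exponent le_top
    -- A ∘ z is essentially bounded
    have hAz : MemLp (fun ω => A (z ω)) ⊤ μ := by
      obtain ⟨D, hD⟩ := (isCompact_closedBall (0:V)
        (eLpNormEssSup z μ).toReal).exists_bound_of_continuousOn hAcont.continuousOn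
      refine memLp_top_of_bound (hAcont.comp_aestronglyMeasurable hz.1) D ?_
      filter_upwards [aux_ae_bound hz] with ω hω
      exact hD _ (by simpa [Metric.mem_closedBall, dist_eq_norm] using hω)
    have hAzint : Integrable (fun ω => A (z ω)) μ :=
      (hAz.mono_exponent le_top).integrable le_rfl
    have hAz2 : MemLp (fun ω => A (z ω)) 2 μ := hAz.mono_exponent le_top
    have I1 : ∀ n, Integrable (fun ω => ⟪A (xn n ω), xn n ω⟫) μ :=
      fun n => aux_integrable_pairing (hAxn n) (hxint n)
    have I2 : ∀ n, Integrable (fun ω => ⟪A (xn n ω), z ω⟫) μ :=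
      fun n => aux_integrable_pairing (hAxn n) hzint
    have I3 : ∀ n, Integrable (fun ω => ⟪A (z ω), xn n ω⟫) μ :=
      fun n => aux_integrable_pairing hAz (hxint n)
    have I4 : Integrable (fun ω => ⟪A (z ω), z ω⟫) μ := aux_integrable_pairing hAz hzint
    set b : ℕ → ℝ := fun n => (∫ ω, ⟪A (xn n ω), z ω⟫ ∂μ) + (∫ ω, ⟪A (z ω), xn n ω⟫ ∂μ)
      - ∫ ω, ⟪A (z ω), z ω⟫ ∂μ with hb
    have hbn : ∀ n, b n ≤ a n := by
      intro n
      have I12 : Integrable (fun ω => ⟪A (xn n ω), xn n ω⟫ - ⟪A (xn n ω), z ω⟫) μ :=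
        (I1 n).sub (I2 n)
      have I34 : Integrable (fun ω => ⟪A (z ω), xn n ω⟫ - ⟪A (z ω), z ω⟫) μ :=
        (I3 n).sub I4
      have h0 : 0 ≤ ∫ ω, ⟪A (xn n ω) - A (z ω), xn n ω - z ω⟫ ∂μ :=
        integral_nonneg fun ω => hAmono _ _
      have hexp : ∫ ω, ⟪A (xn n ω) - A (z ω), xn n ω - z ω⟫ ∂μ
          = (∫ ω, ⟪A (xn n ω), xn n ω⟫ ∂μ) - (∫ ω, ⟪A (xn n ω), z ω⟫ ∂μ)
            - ((∫ ω, ⟪A (z ω), xn n ω⟫ ∂μ) - ∫ ω, ⟪A (z ω), z ω⟫ ∂μ) := by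
        rw [show (fun ω => ⟪A (xn n ω) - A (z ω), xn n ω - z ω⟫)
            = fun ω => (⟪A (xn n ω), xn n ω⟫ - ⟪A (xn n ω), z ω⟫)
              - (⟪A (z ω), xn n ω⟫ - ⟪A (z ω), z ω⟫) from funext fun ω => by
            rw [inner_sub_left, inner_sub_right, inner_sub_right]]
        rw [integral_sub I12 I34, integral_sub (I1 n) (I2 n), integral_sub (I3 n) I4]
      rw [hexp] at h0
      have hbval : b n = (∫ ω, ⟪A (xn n ω), z ω⟫ ∂μ) + (∫ ω, ⟪A (z ω), xn n ω⟫ ∂μ)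
          - ∫ ω, ⟪A (z ω), z ω⟫ ∂μ := rfl
      have haval : a n = ∫ ω, ⟪A (xn n ω), xn n ω⟫ ∂μ := rfl
      rw [hbval, haval]
      linarith
    have hb_tendsto : Tendsto b atTop (nhds ((∫ ω, ⟪χ ω, z ω⟫ ∂μ)
        + (∫ ω, ⟪A (z ω), x ω⟫ ∂μ) - ∫ ω, ⟪A (z ω), z ω⟫ ∂μ)) := by
      have h1 := hweakstar z hzint
      have h2 : Tendsto (fun n => ∫ ω, ⟪A (z ω), xn n ω⟫ ∂μ) atTop
          (nhds (∫ ω, ⟪A (z ω), x ω⟫ ∂μ)) := by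
        have h2' := hweak (fun ω => A (z ω)) hAz2
        simp_rw [fun n => show (fun ω => ⟪xn n ω, A (z ω)⟫) = fun ω => ⟪A (z ω), xn n ω⟫ from
          funext fun ω => real_inner_comm _ _] at h2'
        simpa [show (fun ω => ⟪x ω, A (z ω)⟫) = fun ω => ⟪A (z ω), x ω⟫ from
          funext fun ω => real_inner_comm _ _] using h2'
      exact (h1.add h2).sub tendsto_const_nhds
    -- b's limit is at most ∫⟪χ, x⟫
    have hBle : (∫ ω, ⟪χ ω, z ω⟫ ∂μ) + (∫ ω, ⟪A (z ω), x ω⟫ ∂μ) - (∫ ω, ⟪A (z ω), z ω⟫ ∂μ)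
        ≤ ∫ ω, ⟪χ ω, x ω⟫ ∂μ := by
      have hlim_b := hb_tendsto.limsup_eq
      have hle : limsup b atTop ≤ limsup a atTop := by
        refine limsup_le_limsup (Eventually.of_forall hbn) ?_ ?_
        · exact hb_tendsto.isCoboundedUnder_le
        · exact isBoundedUnder_of ⟨M, hM⟩
      rw [hlim_b] at hle
      exact hle.trans hlimsup
    -- conclude
    have J1 : Integrable (fun ω => ⟪χ ω, x ω⟫) μ :=
      aux_integrable_pairing hχ (hx.integrable one_le_two)
    have J2 : Integrable (fun ω => ⟪χ ω, z ω⟫) μ := aux_integrable_pairing hχ hzint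
    have J3 : Integrable (fun ω => ⟪A (z ω), x ω⟫) μ :=
      aux_integrable_pairing hAz (hx.integrable one_le_two)
    have J12 : Integrable (fun ω => ⟪χ ω, x ω⟫ - ⟪χ ω, z ω⟫) μ := J1.sub J2
    have J34 : Integrable (fun ω => ⟪A (z ω), x ω⟫ - ⟪A (z ω), z ω⟫) μ := J3.sub I4
    have hexp2 : ∫ ω, ⟪χ ω - A (z ω), x ω - z ω⟫ ∂μ
        = (∫ ω, ⟪χ ω, x ω⟫ ∂μ) - (∫ ω, ⟪χ ω, z ω⟫ ∂μ)
          - ((∫ ω, ⟪A (z ω), x ω⟫ ∂μ) - ∫ ω, ⟪A (z ω), z ω⟫ ∂μ) := by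
      rw [show (fun ω => ⟪χ ω - A (z ω), x ω - z ω⟫)
          = fun ω => (⟪χ ω, x ω⟫ - ⟪χ ω, z ω⟫) - (⟪A (z ω), x ω⟫ - ⟪A (z ω), z ω⟫)
          from funext fun ω => by
          rw [inner_sub_left, inner_sub_right, inner_sub_right]]
      rw [integral_sub J12 J34, integral_sub J1 J2, integral_sub J3 I4]
    rw [hexp2]
    linarith
  -- Step 3: general y via truncation.
  intro y hy
  by_cases hgint : Integrable (fun ω => ⟪χ ω - A (y ω), x ω - y ω⟫) μ
  swap
  · rw [integral_undef hgint]
  -- replace y by a strongly measurable representative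
  obtain ⟨y', hy'meas, hyy'⟩ : ∃ y' : Ω → V, StronglyMeasurable y' ∧ y =ᵐ[μ] y' :=
    ⟨hy.1.mk y, hy.1.stronglyMeasurable_mk, hy.1.ae_eq_mk⟩
  have hEq : ∫ ω, ⟪χ ω - A (y ω), x ω - y ω⟫ ∂μ
      = ∫ ω, ⟪χ ω - A (y' ω), x ω - y' ω⟫ ∂μ := by
    refine integral_congr_ae ?_
    filter_upwards [hyy'] with ω hω
    rw [hω]
  have hgint' : Integrable (fun ω => ⟪χ ω - A (y' ω), x ω - y' ω⟫) μ := by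
    refine hgint.congr ?_
    filter_upwards [hyy'] with ω hω
    rw [hω]
  rw [hEq]
  -- truncations
  set E : ℕ → Set Ω := fun k => {ω | ‖y' ω‖ ≤ (k : ℝ)} with hE
  have hEmeas : ∀ k, MeasurableSet (E k) :=
    fun k => measurableSet_le hy'meas.norm.measurable measurable_const
  set z : ℕ → Ω → V := fun k => (E k).indicator y' with hzdef
  have hzmem : ∀ k, MemLp (z k) ⊤ μ := by
    intro k
    refine memLp_top_of_bound
      ((hy'meas.indicator (hEmeas k)).aestronglyMeasurable) (k : ℝ)
      (Eventually.of_forall fun ω => ?_)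
    by_cases hmem : ω ∈ E k
    · rw [hzdef]; simp only [Set.indicator_of_mem hmem]; exact hmem
    · rw [hzdef]; simp [Set.indicator_of_notMem hmem]
  set h : Ω → ℝ := fun ω => ⟪χ ω - A 0, x ω⟫ with hh
  have hhint : Integrable h μ :=
    aux_integrable_pairing (hχ.sub (memLp_top_const (A 0))) (hx.integrable one_le_two)
  have hfk : ∀ k ω, ⟪χ ω - A (z k ω), x ω - z k ω⟫
      = if ω ∈ E k then ⟪χ ω - A (y' ω), x ω - y' ω⟫ else h ω := by
    intro k ω
    by_cases hmem : ω ∈ E k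
    · rw [if_pos hmem, hzdef]; simp only [Set.indicator_of_mem hmem]
    · rw [if_neg hmem, hzdef]; simp [Set.indicator_of_notMem hmem, hh]
  -- dominated convergence
  have hdom : Tendsto (fun k => ∫ ω, ⟪χ ω - A (z k ω), x ω - z k ω⟫ ∂μ) atTop
      (nhds (∫ ω, ⟪χ ω - A (y' ω), x ω - y' ω⟫ ∂μ)) := by
    refine tendsto_integral_of_dominated_convergence
      (fun ω => ‖⟪χ ω - A (y' ω), x ω - y' ω⟫‖ + ‖h ω‖)
      (fun k => ?_) (hgint'.norm.add hhint.norm) (fun k => ?_) ?_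
    · exact (hχ.1.sub (hAcont.comp_aestronglyMeasurable
        ((hy'meas.indicator (hEmeas k)).aestronglyMeasurable))).inner
        (hx.1.sub ((hy'meas.indicator (hEmeas k)).aestronglyMeasurable))
    · refine Eventually.of_forall fun ω => ?_
      rw [hfk k ω]
      by_cases hmem : ω ∈ E k
      · rw [if_pos hmem]
        exact le_add_of_nonneg_right (norm_nonneg _)
      · rw [if_neg hmem]
        exact le_add_of_nonneg_left (norm_nonneg _)
    · refine Eventually.of_forall fun ω => ?_
      have hconst : (fun k => ⟪χ ω - A (z k ω), x ω - z k ω⟫)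
          =ᶠ[atTop] (fun _ => ⟪χ ω - A (y' ω), x ω - y' ω⟫) := by
        refine eventually_atTop.2 ⟨⌈‖y' ω‖⌉₊, fun k hk => ?_⟩
        show ⟪χ ω - A (z k ω), x ω - z k ω⟫ = ⟪χ ω - A (y' ω), x ω - y' ω⟫
        rw [hfk k ω, if_pos]
        exact le_trans (Nat.le_ceil _) (Nat.cast_le.2 hk)
      exact Tendsto.congr' hconst.symm tendsto_const_nhds
  exact ge_of_tendsto' hdom fun k => key (z k) (hzmem k)
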